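/- Let k be a positive integer and let γ be a real number with 12k²(k−1)²/(2k−1) < γ < 12k²(k+1)²/(2k+1). Let u : (0,1) → {−1,1} be piecewise constant with finitely many jumps, i.e. there exist points 0 = t₀ < t₁ < … < t_j < t_{j+1} = 1 such that u is constant on each interval (t_i, t_{i+1}) and takes different values on adjacent intervals, and assume ∫₀¹ u(t) dt = 0. Set w(y) = ∫₀^y u(t) dt. Then j + γ ∫₀¹ w(y)² dy ≥ k + γ/(12k²), with equality if and only if u = u_k almost everywhere or u = −u_k almost everywhere. -/

import Mathlib

open MeasureTheory intervalIntegral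

/-- The lamellar configuration `u_k`: equals `(-1)^j` on `(y_j, y_{j+1})` where
`y_j = (2j-1)/(2k)`, `y_0 = 0`, `y_{k+1} = 1`. -/
noncomputable def uk (k : ℕ) (t : ℝ) : ℝ := (-1 : ℝ) ^ ⌊(k : ℝ) * t + 1 / 2⌋

section PokAux

lemma pok_key_id (n x y : ℝ) (hn : n ≠ 0) :
    x^3/3 + y^3/3 + ((n:ℝ)-1)*((1/n)^3/12 - (1/n)^3/4) + ((1/n)^2/4)*(1 - x - y)
    = 1/(12*n^2) + (2*x - 1/n)^2*(2*x + 2*(1/n))/24 + (2*y - 1/n)^2*(2*y + 2*(1/n))/24 := by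
  field_simp
  ring

lemma pok_gmono (a b : ℝ) (ha : 0 ≤ a) (hb : 0 ≤ b) (hab : a ≤ b) :
    a^2*(a+1)^2*(2*b+1) ≤ b^2*(b+1)^2*(2*a+1) := by
  nlinarith [sq_nonneg (a*b), sq_nonneg (a+b), mul_nonneg ha hb, sq_nonneg (b-a),
    mul_nonneg (mul_nonneg ha ha) (sub_nonneg.2 hab),
    mul_nonneg (mul_nonneg hb hb) (sub_nonneg.2 hab)]

lemma pok_fbound (k : ℕ) (hk : 1 ≤ k) (γ : ℝ)
    (hγ1 : 12 * (k : ℝ) ^ 2 * ((k : ℝ) - 1) ^ 2 / (2 * (k : ℝ) - 1) < γ)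
    (hγ2 : γ < 12 * (k : ℝ) ^ 2 * ((k : ℝ) + 1) ^ 2 / (2 * (k : ℝ) + 1))
    (n : ℕ) (hn : 1 ≤ n) :
    ((k:ℝ) + γ/(12*(k:ℝ)^2) ≤ (n:ℝ) + γ/(12*(n:ℝ)^2)) ∧
    (n ≠ k → (k:ℝ) + γ/(12*(k:ℝ)^2) < (n:ℝ) + γ/(12*(n:ℝ)^2)) := by
  have hk1 : (1:ℝ) ≤ (k:ℝ) := by exact_mod_cast hk
  have hkpos : (0:ℝ) < 2*(k:ℝ) - 1 := by linarith
  have hkpos' : (0:ℝ) < 2*(k:ℝ) + 1 := by linarith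
  have hγ1' : 12 * (k:ℝ)^2 * ((k:ℝ)-1)^2 < γ * (2*(k:ℝ)-1) := by
    rw [div_lt_iff₀ hkpos] at hγ1; linarith
  have hγ2' : γ * (2*(k:ℝ)+1) < 12 * (k:ℝ)^2 * ((k:ℝ)+1)^2 := by
    rw [lt_div_iff₀ hkpos'] at hγ2; linarith
  have key_dec : ∀ n : ℕ, 1 ≤ n → n < k →
      (n:ℝ) + γ/(12*(n:ℝ)^2) > ((n:ℕ)+1 : ℕ) + γ/(12*(((n:ℕ)+1:ℕ):ℝ)^2) := by
    intro n hn1 hnk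
    have hn1' : (1:ℝ) ≤ (n:ℝ) := by exact_mod_cast hn1
    have hnk' : (n:ℝ) ≤ (k:ℝ) - 1 := by
      have : (n:ℝ) + 1 ≤ (k:ℝ) := by exact_mod_cast hnk
      linarith
    have hg := pok_gmono (n:ℝ) ((k:ℝ)-1) (by linarith) (by linarith) hnk'
    have hstep : 12 * (n:ℝ)^2 * ((n:ℝ)+1)^2 < γ * (2*(n:ℝ)+1) := by
      have h1 : 12 * (n:ℝ)^2 * ((n:ℝ)+1)^2 * (2*(k:ℝ)-1)
          ≤ 12*((k:ℝ)-1)^2*(k:ℝ)^2*(2*(n:ℝ)+1) := by nlinarith [hg]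
      have h2 : 12*((k:ℝ)-1)^2*(k:ℝ)^2*(2*(n:ℝ)+1) < γ * (2*(k:ℝ)-1) * (2*(n:ℝ)+1) := by
        have hpos : (0:ℝ) < 2*(n:ℝ)+1 := by linarith
        nlinarith [hγ1', hpos]
      have h3 : 12 * (n:ℝ)^2 * ((n:ℝ)+1)^2 * (2*(k:ℝ)-1) < γ * (2*(n:ℝ)+1) * (2*(k:ℝ)-1) := by
        linarith
      exact lt_of_mul_lt_mul_right (by linarith [h3]) (le_of_lt hkpos)
    have hnpos : (0:ℝ) < (n:ℝ)^2 := by positivity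
    have hn1pos : (0:ℝ) < ((n:ℝ)+1)^2 := by positivity
    have hdiff : γ/(12*(n:ℝ)^2) - γ/(12*((n:ℝ)+1)^2)
        = γ*(2*(n:ℝ)+1)/(12*(n:ℝ)^2*((n:ℝ)+1)^2) := by
      field_simp; ring
    have : (1:ℝ) < γ*(2*(n:ℝ)+1)/(12*(n:ℝ)^2*((n:ℝ)+1)^2) := by
      rw [lt_div_iff₀ (by positivity)]; linarith
    push_cast
    linarith [hdiff, this]
  have key_inc : ∀ n : ℕ, k ≤ n →
      (n:ℝ) + γ/(12*(n:ℝ)^2) < ((n:ℕ)+1 : ℕ) + γ/(12*(((n:ℕ)+1:ℕ):ℝ)^2) := by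
    intro n hnk
    have hn1' : (1:ℝ) ≤ (n:ℝ) := by
      have : (1:ℝ) ≤ (k:ℝ) := hk1
      have : (k:ℝ) ≤ (n:ℝ) := by exact_mod_cast hnk
      linarith
    have hg := pok_gmono (k:ℝ) (n:ℝ) (by linarith) (by linarith) (by exact_mod_cast hnk)
    have hstep : γ * (2*(n:ℝ)+1) < 12 * (n:ℝ)^2 * ((n:ℝ)+1)^2 := by
      have h1 : 12*(k:ℝ)^2*((k:ℝ)+1)^2*(2*(n:ℝ)+1) ≤ 12*(n:ℝ)^2*((n:ℝ)+1)^2*(2*(k:ℝ)+1) := by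
        nlinarith [hg]
      have h2 : γ * (2*(n:ℝ)+1) * (2*(k:ℝ)+1) < 12*(k:ℝ)^2*((k:ℝ)+1)^2*(2*(n:ℝ)+1) := by
        have hpos : (0:ℝ) < 2*(n:ℝ)+1 := by linarith
        nlinarith [hγ2', hpos]
      exact lt_of_mul_lt_mul_right (by linarith) (le_of_lt hkpos')
    have hdiff : γ/(12*(n:ℝ)^2) - γ/(12*((n:ℝ)+1)^2)
        = γ*(2*(n:ℝ)+1)/(12*(n:ℝ)^2*((n:ℝ)+1)^2) := by
      have : (0:ℝ) < (n:ℝ) := by linarith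
      field_simp; ring
    have : γ*(2*(n:ℝ)+1)/(12*(n:ℝ)^2*((n:ℝ)+1)^2) < 1 := by
      rw [div_lt_iff₀ (by positivity)]; linarith
    push_cast
    linarith [hdiff, this]
  have down : ∀ d : ℕ, ∀ m : ℕ, 1 ≤ m → m + d = k →
      ((k:ℝ) + γ/(12*(k:ℝ)^2) ≤ (m:ℝ) + γ/(12*(m:ℝ)^2)) ∧
      (0 < d → (k:ℝ) + γ/(12*(k:ℝ)^2) < (m:ℝ) + γ/(12*(m:ℝ)^2)) := by
    intro d
    induction d with
    | zero => intro m hm he; simp at he; subst he; exact ⟨le_refl _, by omega⟩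
    | succ d ih =>
      intro m hm he
      have h1 : (m+1) + d = k := by omega
      have := ih (m+1) (by omega) h1
      have hd := key_dec m hm (by omega)
      push_cast at hd this ⊢
      constructor
      · linarith [this.1]
      · intro _; linarith [this.1]
  have up : ∀ d : ℕ, ((k:ℝ) + γ/(12*(k:ℝ)^2) ≤ ((k+d:ℕ):ℝ) + γ/(12*((k+d:ℕ):ℝ)^2)) ∧
      (0 < d → (k:ℝ) + γ/(12*(k:ℝ)^2) < ((k+d:ℕ):ℝ) + γ/(12*((k+d:ℕ):ℝ)^2)) := by
    intro d
    induction d with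
    | zero => simp
    | succ d ih =>
      have hi := key_inc (k+d) (by omega)
      push_cast at hi ih ⊢
      have e : ((k:ℝ) + ((d:ℝ)+1)) = (k:ℝ)+(d:ℝ)+1 := by ring
      rw [e]
      constructor
      · linarith [ih.1]
      · intro _; linarith [ih.1]
  rcases le_or_gt n k with h | h
  · obtain ⟨d, hd⟩ : ∃ d, n + d = k := ⟨k - n, by omega⟩
    have := down d n hn hd
    exact ⟨this.1, fun hne => this.2 (by omega)⟩
  · obtain ⟨d, hd⟩ : ∃ d, k + d = n := ⟨n - k, by omega⟩
    have := up d
    rw [hd] at this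
    exact ⟨this.1, fun _ => this.2 (by omega)⟩

set_option maxHeartbeats 1000000 in
lemma pok_core (m : ℕ) (ℓ ε a : ℕ → ℝ)
    (hl : ∀ i, i ≤ m+1 → 0 < ℓ i)
    (hε2 : ∀ i, i ≤ m+1 → ε i ^ 2 = 1)
    (hεalt : ∀ i, i+1 ≤ m+1 → ε (i+1) = -ε i)
    (ha0 : a 0 = 0) (haend : a (m+2) = 0)
    (harec : ∀ i, i ≤ m+1 → a (i+1) = a i + ε i * ℓ i)
    (hsum : ∑ i ∈ Finset.range (m+2), ℓ i = 1)
    (S : ℝ)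
    (hS : S = ∑ i ∈ Finset.range (m+2),
      (ℓ i * (a i)^2 + ε i * a i * (ℓ i)^2 + (ℓ i)^3/3)) :
    1/(12*((m:ℝ)+1)^2) ≤ S ∧
    (S = 1/(12*((m:ℝ)+1)^2) ↔
      (ℓ 0 = 1/(2*((m:ℝ)+1)) ∧ ℓ (m+1) = 1/(2*((m:ℝ)+1)) ∧
        ∀ i, 1 ≤ i → i ≤ m → ℓ i = 1/((m:ℝ)+1))) := by
  set n : ℝ := (m:ℝ)+1 with hn
  have hnpos : 0 < n := by positivity
  have hn0 : n ≠ 0 := ne_of_gt hnpos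
  set c : ℝ := 1/n with hc
  have hcpos : 0 < c := by positivity
  set P : ℕ → ℝ := fun i => ℓ i * (a i)^2 + ε i * a i * (ℓ i)^2 + (ℓ i)^3/3 with hP
  set D : ℕ → ℝ := fun i => ℓ (i+1) * (a (i+1) + a (i+2))^2/4
      + (ℓ (i+1) - c)^2*(ℓ (i+1) + 2*c)/12 with hD
  set d0 : ℝ := (2*ℓ 0 - c)^2*(2*(ℓ 0) + 2*c)/24 with hd0
  set de : ℝ := (2*ℓ (m+1) - c)^2*(2*(ℓ (m+1)) + 2*c)/24 with hde
  have hP0 : P 0 = (ℓ 0)^3/3 := by simp only [hP]; rw [ha0]; ring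
  have hPe : P (m+1) = (ℓ (m+1))^3/3 := by
    have h1 := harec (m+1) (le_refl _)
    rw [haend] at h1
    have ha' : a (m+1) = -(ε (m+1) * ℓ (m+1)) := by linarith
    simp only [hP]; rw [ha']; ring
  have hPmid : ∀ i ∈ Finset.range m, P (i+1)
      = (c^3/12 - c^3/4 + (c^2/4) * ℓ (i+1)) + D i := by
    intro i hi
    simp only [Finset.mem_range] at hi
    have h1 := harec (i+1) (by omega)
    have h2 := hε2 (i+1) (by omega)
    simp only [hP, hD]
    rw [h1]
    linear_combination (-(ℓ (i+1))^3/4) * h2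
  have hsplit : ∀ f : ℕ → ℝ, ∑ i ∈ Finset.range (m+2), f i
      = f 0 + (∑ i ∈ Finset.range m, f (i+1)) + f (m+1) := by
    intro f
    rw [Finset.sum_range_succ, Finset.sum_range_succ']
    ring
  have hL : ℓ 0 + (∑ i ∈ Finset.range m, ℓ (i+1)) + ℓ (m+1) = 1 := by
    rw [← hsplit ℓ]; exact hsum
  set L : ℝ := ∑ i ∈ Finset.range m, ℓ (i+1) with hLdef
  have hSsum : S = P 0 + (∑ i ∈ Finset.range m, P (i+1)) + P (m+1) := by
    rw [hS, hsplit P]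
  have hmidsum : ∑ i ∈ Finset.range m, P (i+1)
      = (m:ℝ) * (c^3/12 - c^3/4) + (c^2/4) * L + ∑ i ∈ Finset.range m, D i := by
    rw [Finset.sum_congr rfl hPmid]
    rw [Finset.sum_add_distrib, Finset.sum_add_distrib, Finset.sum_const,
      Finset.card_range, ← Finset.mul_sum]
    ring
  have hid : S = 1/(12*n^2) + (d0 + de + ∑ i ∈ Finset.range m, D i) := by
    rw [hSsum, hP0, hPe, hmidsum]
    have hLval : L = 1 - ℓ 0 - ℓ (m+1) := by linarith
    have hm : (m:ℝ) = n - 1 := by rw [hn]; ring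
    rw [hLval, hd0, hde, hc, hm]
    have := pok_key_id n (ℓ 0) (ℓ (m+1)) hn0
    linarith [this]
  have hDnn : ∀ i ∈ Finset.range m, 0 ≤ D i := by
    intro i hi
    simp only [Finset.mem_range] at hi
    have hli := hl (i+1) (by omega)
    have h3 : 0 ≤ (ℓ (i+1) - c)^2*(ℓ (i+1) + 2*c)/12 := by positivity
    have h4 : 0 ≤ ℓ (i+1) * (a (i+1) + a (i+2))^2/4 := by positivity
    simp only [hD]
    linarith
  have hd0nn : 0 ≤ d0 := by
    have := hl 0 (by omega); simp only [hd0]; positivity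
  have hdenn : 0 ≤ de := by
    have := hl (m+1) (le_refl _); simp only [hde]; positivity
  have hDsumnn : 0 ≤ ∑ i ∈ Finset.range m, D i := Finset.sum_nonneg hDnn
  constructor
  · rw [hid]; have : n^2 > 0 := by positivity
    nlinarith
  constructor
  · intro heq
    rw [hid] at heq
    have hz : d0 + de + ∑ i ∈ Finset.range m, D i = 0 := by linarith
    have hd0z : d0 = 0 := by linarith
    have hdez : de = 0 := by linarith
    have hDz : ∀ i ∈ Finset.range m, D i = 0 := by
      have hsz : ∑ i ∈ Finset.range m, D i = 0 := by linarith
      exact (Finset.sum_eq_zero_iff_of_nonneg hDnn).1 hsz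
    have hl0 : ℓ 0 = 1/(2*n) := by
      have h1 : (2*ℓ 0 - c)^2*(2*(ℓ 0) + 2*c) = 0 := by
        simp only [hd0] at hd0z; linarith
      have hpos : 0 < 2*(ℓ 0) + 2*c := by have := hl 0 (by omega); linarith
      have : (2*ℓ 0 - c)^2 = 0 := by
        rcases mul_eq_zero.1 h1 with h | h
        · exact h
        · exact absurd h (ne_of_gt hpos)
      have h2 : 2*ℓ 0 - c = 0 := by
        exact pow_eq_zero_iff (by norm_num) |>.1 this
      rw [hc] at h2; field_simp at h2 ⊢; linarith
    have hle : ℓ (m+1) = 1/(2*n) := by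
      have h1 : (2*ℓ (m+1) - c)^2*(2*(ℓ (m+1)) + 2*c) = 0 := by
        simp only [hde] at hdez; linarith
      have hpos : 0 < 2*(ℓ (m+1)) + 2*c := by have := hl (m+1) (le_refl _); linarith
      have : (2*ℓ (m+1) - c)^2 = 0 := by
        rcases mul_eq_zero.1 h1 with h | h
        · exact h
        · exact absurd h (ne_of_gt hpos)
      have h2 : 2*ℓ (m+1) - c = 0 := pow_eq_zero_iff (by norm_num) |>.1 this
      rw [hc] at h2; field_simp at h2 ⊢; linarith
    refine ⟨hl0, hle, ?_⟩
    intro i hi1 him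
    obtain ⟨ii, rfl⟩ : ∃ ii, i = ii + 1 := ⟨i-1, by omega⟩
    have hiz := hDz ii (Finset.mem_range.2 (by omega))
    simp only [hD] at hiz
    set i := ii + 1 with hii
    have hli := hl i (by omega)
    have t1 : 0 ≤ ℓ i * (a i + a (i+1))^2/4 := by positivity
    have t2pos : 0 < ℓ i + 2*c := by linarith
    have t2 : 0 ≤ (ℓ i - c)^2*(ℓ i + 2*c)/12 := by positivity
    have hz2 : (ℓ i - c)^2*(ℓ i + 2*c) = 0 := by nlinarith
    have : (ℓ i - c)^2 = 0 := by
      rcases mul_eq_zero.1 hz2 with h | h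
      · exact h
      · exact absurd h (ne_of_gt t2pos)
    have h2 : ℓ i - c = 0 := pow_eq_zero_iff (by norm_num) |>.1 this
    rw [hc] at h2; linarith
  · rintro ⟨hl0, hle, hmid⟩
    rw [hid]
    have hainv : ∀ i, 1 ≤ i → i ≤ m+1 → a i = -(ε i) * (c/2) := by
      intro i
      induction i with
      | zero => omega
      | succ i ih =>
        intro _ hi
        rcases Nat.eq_zero_or_pos i with h0 | hpos
        · subst h0
          have h1 := harec 0 (by omega)
          have h2n : (1:ℝ)/(2*n) = c/2 := by rw [hc]; field_simp
          rw [ha0, hl0, h2n] at h1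
          have halt := hεalt 0 (by omega)
          rw [h1, halt]; ring
        · have hi' : i ≤ m := by omega
          have hia := ih hpos (by omega)
          have h1 := harec i (by omega)
          have hli : ℓ i = c := by
            rw [hmid i hpos hi', hc]
          have halt := hεalt i (by omega)
          rw [h1, hia, hli, halt]; ring
    have hDz : ∀ i ∈ Finset.range m, D i = 0 := by
      intro i hi
      simp only [Finset.mem_range] at hi
      have h1 := hainv (i+1) (by omega) (by omega)
      have h2 := hainv (i+2) (by omega) (by omega)
      have halt := hεalt (i+1) (by omega)
      have hli : ℓ (i+1) = c := hmid (i+1) (by omega) (by omega)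
      simp only [hD]
      rw [h1, h2, halt, hli]
      ring
    have hd0z : d0 = 0 := by simp only [hd0]; rw [hl0, hc]; field_simp; norm_num
    have hdez : de = 0 := by simp only [hde]; rw [hle, hc]; field_simp; norm_num
    rw [hd0z, hdez, Finset.sum_eq_zero hDz]
    ring

noncomputable def pokY (k : ℕ) (m : ℕ) : ℝ :=
  if m = 0 then 0 else if m = k+1 then 1 else (2*(m:ℝ)-1)/(2*(k:ℝ))

lemma pokY0 (k : ℕ) : pokY k 0 = 0 := by simp [pokY]

lemma pokYend (k : ℕ) : pokY k (k+1) = 1 := by simp [pokY]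

lemma pokYmid (k m : ℕ) (h1 : 1 ≤ m) (h2 : m ≤ k) :
    pokY k m = (2*(m:ℝ)-1)/(2*(k:ℝ)) := by
  have : m ≠ 0 := by omega
  have : m ≠ k+1 := by omega
  simp [pokY, *]

lemma pokYmono (k : ℕ) (hk : 1 ≤ k) (m : ℕ) (hm : m ≤ k) : pokY k m < pokY k (m+1) := by
  have hkR : (1:ℝ) ≤ (k:ℝ) := by exact_mod_cast hk
  rcases Nat.eq_zero_or_pos m with h0 | hpos
  · subst h0
    rw [pokY0]
    rcases eq_or_lt_of_le hm with he | hlt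
    · rw [← he] at *; rw [pokYend]; norm_num
    · rw [pokYmid k 1 le_rfl (by omega)]
      push_cast
      positivity
  · rcases eq_or_lt_of_le hm with he | hlt
    · rw [he, pokYend, pokYmid k k (by omega) le_rfl]
      rw [div_lt_one (by positivity)]
      linarith
    · rw [pokYmid k m hpos (by omega), pokYmid k (m+1) (by omega) (by omega)]
      rw [div_lt_div_iff₀ (by positivity) (by positivity)]
      push_cast
      nlinarith [hkR]

lemma pok_ukval (k : ℕ) (hk : 1 ≤ k) (m : ℕ) (hm : m ≤ k) (s : ℝ)
    (hs : s ∈ Set.Ioo (pokY k m) (pokY k (m+1))) : uk k s = (-1:ℝ)^m := by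
  obtain ⟨hs1, hs2⟩ := hs
  have hkR : (1:ℝ) ≤ (k:ℝ) := by exact_mod_cast hk
  have hkpos : (0:ℝ) < (k:ℝ) := by linarith
  have hlow : (m:ℝ) ≤ (k:ℝ)*s + 1/2 := by
    rcases Nat.eq_zero_or_pos m with h0 | hpos
    · subst h0
      rw [pokY0] at hs1
      push_cast
      nlinarith
    · rw [pokYmid k m hpos hm] at hs1
      rw [div_lt_iff₀ (by positivity)] at hs1
      nlinarith
  have hhigh : (k:ℝ)*s + 1/2 < (m:ℝ) + 1 := by
    rcases eq_or_lt_of_le hm with he | hlt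
    · subst he
      rw [pokYend] at hs2
      nlinarith
    · rw [pokYmid k (m+1) (by omega) (by omega)] at hs2
      rw [lt_div_iff₀ (by positivity)] at hs2
      push_cast at hs2 ⊢
      nlinarith
  have hfl : ⌊(k:ℝ)*s + 1/2⌋ = (m : ℤ) := by
    rw [Int.floor_eq_iff]
    constructor
    · exact_mod_cast hlow
    · push_cast; exact hhigh
  rw [uk, hfl, zpow_natCast]

lemma pok_mono (N : ℕ) (v : ℕ → ℝ) (hm : ∀ i, i ≤ N → v i < v (i+1)) :
    ∀ a b, a < b → b ≤ N+1 → v a < v b := by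
  intro a b
  induction b with
  | zero => omega
  | succ b ih =>
    intro hab hbN
    rcases Nat.lt_or_ge a b with h | h
    · exact lt_trans (ih h (by omega)) (hm b (by omega))
    · have : a = b := by omega
      subst this; exact hm a (by omega)

lemma pok_cover (N : ℕ) (v : ℕ → ℝ) (hm : ∀ i, i ≤ N → v i < v (i+1)) (s : ℝ)
    (hs1 : v 0 < s) (hs2 : s < v (N+1)) (hne : ∀ i, i ≤ N+1 → s ≠ v i) :
    ∃ i, i ≤ N ∧ v i < s ∧ s < v (i+1) := by
  by_contra h
  push_neg at h
  have key : ∀ i, i ≤ N+1 → v i < s := by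
    intro i
    induction i with
    | zero => intro _; exact hs1
    | succ i ih =>
      intro hi
      have h1 : v i < s := ih (by omega)
      have h2 : v (i+1) ≤ s := h i (by omega) h1
      rcases lt_or_eq_of_le h2 with h3 | h3
      · exact h3
      · exact absurd h3.symm (hne (i+1) hi)
  linarith [key (N+1) le_rfl]

lemma pok_pos (α β : ℝ) (hab : α < β) (hsub : Set.Ioo α β ⊆ Set.Ioo (0:ℝ) 1)
    (P : ℝ → Prop) (hae : ∀ᵐ s ∂(volume.restrict (Set.Ioo (0:ℝ) 1)), P s)
    (hnot : ∀ s ∈ Set.Ioo α β, ¬ P s) : False := by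
  have h1 : volume.restrict (Set.Ioo (0:ℝ) 1) {s | ¬ P s} = 0 := by
    rw [MeasureTheory.ae_iff] at hae; exact hae
  have h2 : volume.restrict (Set.Ioo (0:ℝ) 1) (Set.Ioo α β) = 0 :=
    measure_mono_null (fun s hs => hnot s hs) h1
  rw [MeasureTheory.Measure.restrict_apply measurableSet_Ioo,
    Set.inter_eq_left.2 hsub, Real.volume_Ioo] at h2
  have := ENNReal.ofReal_eq_zero.1 h2
  linarith

end PokAux

set_option maxHeartbeats 1600000 in
/-- For `γ` in the window `(12k²(k−1)²/(2k−1), 12k²(k+1)²/(2k+1))`, any mean-zero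
piecewise constant `±1`-valued `u` on `(0,1)` with exactly `j` jumps satisfies
`j + γ∫₀¹ w² ≥ k + γ/(12k²)` with `w(y) = ∫₀^y u`, with equality iff `u = ±u_k` a.e. -/
theorem stmt0 (k : ℕ) (hk : 1 ≤ k) (γ : ℝ)
    (hγ1 : 12 * (k : ℝ) ^ 2 * ((k : ℝ) - 1) ^ 2 / (2 * (k : ℝ) - 1) < γ)
    (hγ2 : γ < 12 * (k : ℝ) ^ 2 * ((k : ℝ) + 1) ^ 2 / (2 * (k : ℝ) + 1))
    (u : ℝ → ℝ)
    (huval : ∀ s ∈ Set.Ioo (0 : ℝ) 1, u s = 1 ∨ u s = -1)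
    (j : ℕ) (t : ℕ → ℝ)
    (ht0 : t 0 = 0) (htlast : t (j + 1) = 1)
    (htmono : ∀ i, i ≤ j → t i < t (i + 1))
    (hconst : ∀ i, i ≤ j → ∀ x ∈ Set.Ioo (t i) (t (i + 1)),
      ∀ y ∈ Set.Ioo (t i) (t (i + 1)), u x = u y)
    (hjump : ∀ i, i + 1 ≤ j → ∀ x ∈ Set.Ioo (t i) (t (i + 1)),
      ∀ y ∈ Set.Ioo (t (i + 1)) (t (i + 2)), u x ≠ u y)
    (hmean : ∫ s in (0 : ℝ)..1, u s = 0)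
    (w : ℝ → ℝ) (hw : ∀ y, w y = ∫ s in (0 : ℝ)..y, u s) :
    (j : ℝ) + γ * ∫ y in (0 : ℝ)..1, (w y) ^ 2 ≥ (k : ℝ) + γ / (12 * (k : ℝ) ^ 2) ∧
    ((j : ℝ) + γ * ∫ y in (0 : ℝ)..1, (w y) ^ 2 = (k : ℝ) + γ / (12 * (k : ℝ) ^ 2) ↔
      (∀ᵐ s ∂(volume.restrict (Set.Ioo (0 : ℝ) 1)), u s = uk k s) ∨
      (∀ᵐ s ∂(volume.restrict (Set.Ioo (0 : ℝ) 1)), u s = - uk k s)) := by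
  classical
  have hγpos : 0 < γ := by
    have h0 : (0:ℝ) ≤ 12 * (k : ℝ) ^ 2 * ((k : ℝ) - 1) ^ 2 / (2 * (k : ℝ) - 1) := by
      have hk1 : (1:ℝ) ≤ (k:ℝ) := by exact_mod_cast hk
      apply div_nonneg (by positivity)
      linarith
    linarith
  have tmono := pok_mono j t htmono
  have htnn : ∀ i, i ≤ j+1 → 0 ≤ t i := by
    intro i hi
    rcases Nat.eq_zero_or_pos i with h0 | hpos
    · subst h0; rw [ht0]
    · rw [← ht0]; exact le_of_lt (tmono 0 i hpos hi)
  have htle : ∀ i, i ≤ j+1 → t i ≤ 1 := by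
    intro i hi
    rcases eq_or_lt_of_le hi with he | hlt
    · rw [he, htlast]
    · rw [← htlast]; exact le_of_lt (tmono i (j+1) hlt le_rfl)
  have hsub : ∀ i, i ≤ j → Set.Ioo (t i) (t (i+1)) ⊆ Set.Ioo (0:ℝ) 1 := by
    intro i hij s hs
    exact ⟨lt_of_le_of_lt (htnn i (by omega)) hs.1,
      lt_of_lt_of_le hs.2 (htle (i+1) (by omega))⟩
  set ε : ℕ → ℝ := fun i => u ((t i + t (i+1))/2) with hεdef
  have hmidmem : ∀ i, i ≤ j → (t i + t (i+1))/2 ∈ Set.Ioo (t i) (t (i+1)) := by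
    intro i hij
    have := htmono i hij
    exact ⟨by linarith, by linarith⟩
  have hueq : ∀ i, i ≤ j → ∀ s ∈ Set.Ioo (t i) (t (i+1)), u s = ε i := by
    intro i hij s hs
    exact hconst i hij s hs _ (hmidmem i hij)
  have hεval : ∀ i, i ≤ j → ε i = 1 ∨ ε i = -1 := by
    intro i hij
    exact huval _ (hsub i hij (hmidmem i hij))
  have hε2 : ∀ i, i ≤ j → (ε i)^2 = 1 := by
    intro i hij; rcases hεval i hij with h | h <;> rw [h] <;> norm_num
  have hεne : ∀ i, i ≤ j → ε i ≠ 0 := by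
    intro i hij; rcases hεval i hij with h | h <;> rw [h] <;> norm_num
  have hεalt : ∀ i, i+1 ≤ j → ε (i+1) = - ε i := by
    intro i hij
    have hne : ε i ≠ ε (i+1) :=
      hjump i hij _ (hmidmem i (by omega)) _ (hmidmem (i+1) hij)
    rcases hεval i (by omega) with h1 | h1 <;> rcases hεval (i+1) hij with h2 | h2 <;>
      rw [h1, h2] at hne ⊢ <;> simp_all
  -- piece integrals of u
  have hpiece : ∀ i, i ≤ j → ∀ y1 y2, t i ≤ y1 → y1 ≤ y2 → y2 ≤ t (i+1) →
      IntervalIntegrable u volume y1 y2 ∧ (∫ s in y1..y2, u s) = ε i * (y2 - y1) := by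
    intro i hij y1 y2 h1 h2 h3
    have hae : ∀ᵐ x ∂(volume : Measure ℝ), x ∈ Set.uIoc y1 y2 → u x = ε i := by
      have h0 : ∀ᵐ x ∂(volume : Measure ℝ), x ≠ t (i+1) := by
        rw [MeasureTheory.ae_iff]
        have he : {x : ℝ | ¬ x ≠ t (i+1)} = {t (i+1)} := by ext x; simp
        rw [he]; exact measure_singleton _
      filter_upwards [h0] with x hx hmem
      rw [Set.uIoc_of_le h2] at hmem
      have hxI : x ∈ Set.Ioo (t i) (t (i+1)) := by
        refine ⟨lt_of_le_of_lt h1 hmem.1, ?_⟩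
        rcases lt_or_eq_of_le (le_trans hmem.2 h3) with h | h
        · exact h
        · exact absurd h hx
      exact hueq i hij x hxI
    have haer : u =ᵐ[volume.restrict (Set.uIoc y1 y2)] (fun _ => ε i) :=
      (ae_restrict_iff' measurableSet_uIoc).2 hae
    constructor
    · rw [intervalIntegrable_iff]
      have hconst' : MeasureTheory.IntegrableOn (fun _ => ε i) (Set.uIoc y1 y2) volume := by
        refine MeasureTheory.integrableOn_const (hs := ?_)
        rw [Set.uIoc_of_le h2]
        exact measure_Ioc_lt_top.ne
      exact hconst'.congr_fun_ae haer.symm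
    · rw [intervalIntegral.integral_congr_ae hae, intervalIntegral.integral_const,
        smul_eq_mul]
      ring
  have hint0 : ∀ i, i ≤ j+1 → IntervalIntegrable u volume 0 (t i) := by
    intro i
    induction i with
    | zero =>
      intro _
      rw [ht0]
    | succ i ih =>
      intro hi
      exact (ih (by omega)).trans
        ((hpiece i (by omega) (t i) (t (i+1)) le_rfl (le_of_lt (htmono i (by omega))) le_rfl).1)
  have hw0 : w 0 = 0 := by rw [hw]; simp
  have hwt : ∀ i, i ≤ j → ∀ y, t i ≤ y → y ≤ t (i+1) →
      w y = w (t i) + ε i * (y - t i) := by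
    intro i hij y h1 h2
    have hii := hpiece i hij (t i) y le_rfl h1 h2
    have hadd := intervalIntegral.integral_add_adjacent_intervals
      (hint0 i (by omega)) hii.1
    rw [hw y, hw (t i), ← hadd, hii.2]
  set ℓ : ℕ → ℝ := fun i => t (i+1) - t i with hℓdef
  set a : ℕ → ℝ := fun i => w (t i) with hadef
  have ha0 : a 0 = 0 := by simp only [hadef]; rw [ht0]; exact hw0
  have haend : a (j+1) = 0 := by simp only [hadef]; rw [htlast, hw]; exact hmean
  have harec : ∀ i, i ≤ j → a (i+1) = a i + ε i * ℓ i := by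
    intro i hij
    have := hwt i hij (t (i+1)) (le_of_lt (htmono i hij)) le_rfl
    simp only [hadef, hℓdef]
    exact this
  have hlpos : ∀ i, i ≤ j → 0 < ℓ i := by
    intro i hij; simp only [hℓdef]; linarith [htmono i hij]
  have hsum : ∑ i ∈ Finset.range (j+1), ℓ i = 1 := by
    simp only [hℓdef]
    rw [Finset.sum_range_sub (f := t), htlast, ht0]
    ring
  -- piece integrals of w²
  have hw2 : ∀ i, i ≤ j →
      IntervalIntegrable (fun y => (w y)^2) volume (t i) (t (i+1)) ∧
      (∫ y in (t i)..(t (i+1)), (w y)^2)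
        = ℓ i * (a i)^2 + ε i * a i * (ℓ i)^2 + (ℓ i)^3/3 := by
    intro i hij
    have hij1 : t i ≤ t (i+1) := le_of_lt (htmono i hij)
    have hEq : Set.EqOn (fun y => (w y)^2)
        (fun y => (a i + ε i * (y - t i))^2) (Set.uIcc (t i) (t (i+1))) := by
      intro y hy
      rw [Set.uIcc_of_le hij1] at hy
      simp only []
      rw [hwt i hij y hy.1 hy.2]
    have hgint : IntervalIntegrable (fun y => (a i + ε i * (y - t i))^2)
        volume (t i) (t (i+1)) := by
      apply Continuous.intervalIntegrable
      continuity
    constructor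
    · rw [intervalIntegrable_iff] at hgint ⊢
      exact hgint.congr_fun (fun x hx => (hEq (Set.uIoc_subset_uIcc hx)).symm)
        measurableSet_uIoc
    · rw [intervalIntegral.integral_congr hEq]
      have hcomp : (∫ y in (t i)..(t (i+1)), (a i + ε i * (y - t i))^2)
          = ∫ s in (t i - t i)..(t (i+1) - t i), (a i + ε i * s)^2 :=
        intervalIntegral.integral_comp_sub_right (fun s => (a i + ε i * s)^2) (t i)
      rw [hcomp, sub_self]
      have hexp : Set.EqOn (fun s : ℝ => (a i + ε i * s)^2)
          (fun s : ℝ => (a i)^2 + (2 * a i * ε i) * s + s^2)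
          (Set.uIcc 0 (t (i+1) - t i)) := by
        intro s _
        have h2 := hε2 i hij
        simp only []
        linear_combination (s^2) * h2
      rw [intervalIntegral.integral_congr hexp]
      have i1 : IntervalIntegrable (fun s : ℝ => (a i)^2 + (2 * a i * ε i) * s)
          volume 0 (t (i+1) - t i) := by
        apply Continuous.intervalIntegrable; continuity
      have i2 : IntervalIntegrable (fun s : ℝ => s^2) volume 0 (t (i+1) - t i) := by
        apply Continuous.intervalIntegrable; continuity
      have i3 : IntervalIntegrable (fun _ : ℝ => (a i)^2) volume 0 (t (i+1) - t i) :=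
        intervalIntegrable_const
      have i4 : IntervalIntegrable (fun s : ℝ => (2 * a i * ε i) * s)
          volume 0 (t (i+1) - t i) := by
        apply Continuous.intervalIntegrable; continuity
      rw [intervalIntegral.integral_add i1 i2, intervalIntegral.integral_add i3 i4,
        intervalIntegral.integral_const, integral_pow]
      have hmul : (∫ s in (0:ℝ)..(t (i+1) - t i), (2 * a i * ε i) * s)
          = (2 * a i * ε i) * ((t (i+1) - t i)^2/2) := by
        rw [intervalIntegral.integral_const_mul, integral_id]
        ring
      rw [hmul, smul_eq_mul]
      have hl : ℓ i = t (i+1) - t i := rfl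
      rw [hl]
      push_cast
      ring
  have hw2sum : (∫ y in (0:ℝ)..1, (w y)^2)
      = ∑ i ∈ Finset.range (j+1),
        (ℓ i * (a i)^2 + ε i * a i * (ℓ i)^2 + (ℓ i)^3/3) := by
    have hadj := intervalIntegral.sum_integral_adjacent_intervals
      (a := t) (n := j+1) (f := fun y => (w y)^2) (μ := volume)
      (fun i hi => (hw2 i (by omega)).1)
    rw [ht0, htlast] at hadj
    rw [← hadj]
    refine Finset.sum_congr rfl (fun i hi => ?_)
    have := Finset.mem_range.1 hi
    exact (hw2 i (by omega)).2

  set S : ℝ := ∫ y in (0:ℝ)..1, (w y)^2 with hSdef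
  have hj1 : 1 ≤ j := by
    by_contra hj0
    have hj0' : j = 0 := by omega
    subst hj0'
    have hp := (hpiece 0 le_rfl 0 1 (by rw [ht0]) (by norm_num) (by rw [htlast])).2
    rw [hmean] at hp
    rcases hεval 0 le_rfl with h|h <;> rw [h] at hp <;> norm_num at hp
  obtain ⟨m, rfl⟩ : ∃ m, j = m + 1 := ⟨j - 1, by omega⟩
  have htlast' : t (m+2) = 1 := htlast
  have pokYend' : ∀ K : ℕ, pokY K (K+1) = 1 := pokYend
  have hcore := pok_core m ℓ ε a (fun i hi => hlpos i hi) (fun i hi => hε2 i hi)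
    (fun i hi => hεalt i hi) ha0 haend (fun i hi => harec i hi) hsum S hw2sum
  have hmc : ((m:ℝ)+1) = ((m+1:ℕ):ℝ) := by push_cast; ring
  have hkorder := pok_fbound k hk γ hγ1 hγ2 (m+1) (by omega)
  have hSlb : 1/(12*((m+1:ℕ):ℝ)^2) ≤ S := by rw [← hmc]; exact hcore.1
  have hmul : γ * (1/(12*((m+1:ℕ):ℝ)^2)) ≤ γ * S :=
    mul_le_mul_of_nonneg_left hSlb (le_of_lt hγpos)
  have hdivmul : γ/(12*((m+1:ℕ):ℝ)^2) = γ * (1/(12*((m+1:ℕ):ℝ)^2)) := by ring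
  constructor
  · linarith [hkorder.1]
  constructor
  · -- equality implies lamellar
    intro heq
    have hjk : m + 1 = k := by
      by_contra hne
      have hstrict := hkorder.2 hne
      linarith
    have hSeq : S = 1/(12*((m:ℝ)+1)^2) := by
      have hkc : (k:ℝ) = ((m+1:ℕ):ℝ) := by rw [← hjk]
      rw [hkc] at heq
      have hγS : γ * S = γ * (1/(12*((m+1:ℕ):ℝ)^2)) := by linarith
      have hS2 : S = 1/(12*((m+1:ℕ):ℝ)^2) := mul_left_cancel₀ (ne_of_gt hγpos) hγS
      rw [hS2, hmc]
    obtain ⟨hl0, hlend, hlmid⟩ := (hcore.2).1 hSeq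
    have hεpat : ∀ i, i ≤ m+1 → ε i = ε 0 * (-1:ℝ)^i := by
      intro i
      induction i with
      | zero => intro _; simp
      | succ i ih =>
        intro hi
        rw [hεalt i hi, ih (by omega), pow_succ]
        ring
    subst hjk
    have hm0 : ((m:ℝ)+1) ≠ 0 := by positivity
    have hty : ∀ i, i ≤ m+2 → t i = pokY (m+1) i := by
      intro i
      induction i with
      | zero => intro _; rw [ht0, pokY0]
      | succ i ih =>
        intro hi
        have hrec : t (i+1) = t i + ℓ i := by simp only [hℓdef]; ring
        rcases Nat.eq_zero_or_pos i with h0|hpos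
        · subst h0
          rw [hrec, ih (by omega), pokY0, hl0, pokYmid (m+1) 1 (by omega) (by omega)]
          push_cast
          field_simp <;> (try ring1) <;> (try norm_num) <;> (try (left; ring))
        · rcases eq_or_lt_of_le hi with he|hlt
          · have hieq : i = m+1 := by omega
            subst hieq
            rw [hrec, ih (by omega), hlend,
              pokYmid (m+1) (m+1) (by omega) le_rfl, pokYend' (m+1)]
            push_cast
            field_simp <;> (try ring1) <;> (try norm_num) <;> (try (left; ring))
          · have him : i ≤ m := by omega
            rw [hrec, ih (by omega), hlmid i hpos him,
              pokYmid (m+1) i hpos (by omega), pokYmid (m+1) (i+1) (by omega) (by omega)]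
            push_cast
            field_simp <;> (try ring1) <;> (try norm_num) <;> (try (left; ring))
    have claim : ∀ s ∈ Set.Ioo (0:ℝ) 1, (∀ i : ℕ, s ≠ t i) →
        u s = ε 0 * uk (m+1) s := by
      intro s hs hsne
      obtain ⟨i, hi, h1, h2⟩ := pok_cover (m+1) t htmono s
        (by rw [ht0]; exact hs.1) (by rw [htlast]; exact hs.2)
        (fun i _ => hsne i)
      rw [hueq i hi s ⟨h1, h2⟩, hεpat i hi]
      have hsY : s ∈ Set.Ioo (pokY (m+1) i) (pokY (m+1) (i+1)) := by
        rw [← hty i (by omega), ← hty (i+1) (by omega)]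
        exact ⟨h1, h2⟩
      rw [pok_ukval (m+1) (by omega) i hi s hsY]
    have haefin : ∀ᵐ s ∂(volume.restrict (Set.Ioo (0:ℝ) 1)),
        u s = ε 0 * uk (m+1) s := by
      have h1 : ∀ᵐ s ∂(volume : Measure ℝ), ∀ i : ℕ, s ≠ t i := by
        rw [MeasureTheory.ae_all_iff]
        intro i
        rw [MeasureTheory.ae_iff]
        have he : {x : ℝ | ¬ x ≠ t i} = {t i} := by ext x; simp
        rw [he]; exact measure_singleton _
      filter_upwards [MeasureTheory.ae_restrict_of_ae h1,
        MeasureTheory.ae_restrict_mem measurableSet_Ioo] with s hs1 hs2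
      exact claim s hs2 hs1
    rcases hεval 0 (by omega) with h|h
    · left
      filter_upwards [haefin] with s hs
      rw [hs, h, one_mul]
    · right
      filter_upwards [haefin] with s hs
      rw [hs, h]; ring
  · -- lamellar implies equality
    intro hae
    obtain ⟨σ, hσval, hσae⟩ : ∃ σ:ℝ, (σ = 1 ∨ σ = -1) ∧
        ∀ᵐ s ∂(volume.restrict (Set.Ioo (0:ℝ) 1)), u s = σ * uk k s := by
      rcases hae with h|h
      · exact ⟨1, Or.inl rfl, by filter_upwards [h] with s hs; rw [hs]; ring⟩
      · exact ⟨-1, Or.inr rfl, by filter_upwards [h] with s hs; rw [hs]; ring⟩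
    have hσne : σ ≠ 0 := by rcases hσval with h|h <;> rw [h] <;> norm_num
    have Ymono' := pok_mono k (pokY k) (fun i hi => pokYmono k hk i hi)
    have hY0 : ∀ mm, mm ≤ k+1 → 0 ≤ pokY k mm := by
      intro mm hmm
      rcases Nat.eq_zero_or_pos mm with h0|hpos
      · subst h0; rw [pokY0]
      · rw [← pokY0 k]; exact le_of_lt (Ymono' 0 mm hpos hmm)
    have hY1 : ∀ mm, mm ≤ k+1 → pokY k mm ≤ 1 := by
      intro mm hmm
      rcases eq_or_lt_of_le hmm with he|hlt
      · rw [he, pokYend]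
      · rw [← pokYend k]; exact le_of_lt (Ymono' mm (k+1) hlt le_rfl)
    have keylem : ∀ (α β c1 c2 : ℝ), α < β → Set.Ioo α β ⊆ Set.Ioo 0 1 →
        (∀ s ∈ Set.Ioo α β, u s = c1) → (∀ s ∈ Set.Ioo α β, uk k s = c2) →
        c1 = σ * c2 := by
      intro α β c1 c2 hab hsub2 h1 h2
      by_contra hcc
      exact pok_pos α β hab hsub2 (fun s => u s = σ * uk k s) hσae
        (fun s hs hPs => hcc (by rw [← h1 s hs, hPs, h2 s hs]))
    have B1 : ∀ mm, 1 ≤ mm → mm ≤ k → ∃ i, 1 ≤ i ∧ i ≤ m+1 ∧ t i = pokY k mm := by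
      intro mm h1 h2
      by_contra hB
      push_neg at hB
      have hYpos : 0 < pokY k mm := by
        rw [← pokY0 k]; exact Ymono' 0 mm (by omega) (by omega)
      have hYlt1 : pokY k mm < 1 := by
        rw [← pokYend k]; exact Ymono' mm (k+1) (by omega) le_rfl
      have hne : ∀ i, i ≤ (m+1)+1 → pokY k mm ≠ t i := by
        intro i hi
        rcases Nat.eq_zero_or_pos i with h0|hpos
        · subst h0; rw [ht0]; exact ne_of_gt hYpos
        rcases eq_or_lt_of_le hi with he|hlt
        · rw [he, htlast']; exact ne_of_lt hYlt1
        · exact fun hcon => hB i hpos (by omega) hcon.symm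
      obtain ⟨i, hi, hlt1, hlt2⟩ := pok_cover (m+1) t htmono (pokY k mm)
        (by rw [ht0]; exact hYpos) (by rw [htlast]; exact hYlt1) hne
      obtain ⟨mm', rfl⟩ : ∃ mm', mm = mm' + 1 := ⟨mm-1, by omega⟩
      have hYm'lt : pokY k mm' < pokY k (mm'+1) := pokYmono k hk mm' (by omega)
      have e1 : ε i = σ * (-1:ℝ)^mm' := by
        apply keylem (max (t i) (pokY k mm')) (pokY k (mm'+1)) _ _
          (max_lt hlt1 hYm'lt)
        · intro s hs
          exact ⟨lt_of_le_of_lt (le_trans (hY0 mm' (by omega)) (le_max_right _ _)) hs.1,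
            lt_of_lt_of_le hs.2 (hY1 (mm'+1) (by omega))⟩
        · intro s hs
          apply hueq i hi s
          exact ⟨lt_of_le_of_lt (le_max_left _ _) hs.1, lt_trans hs.2 hlt2⟩
        · intro s hs
          exact pok_ukval k hk mm' (by omega) s
            ⟨lt_of_le_of_lt (le_max_right _ _) hs.1, hs.2⟩
      have e2 : ε i = σ * (-1:ℝ)^(mm'+1) := by
        apply keylem (pokY k (mm'+1)) (min (t (i+1)) (pokY k (mm'+2))) _ _
          (lt_min hlt2 (pokYmono k hk (mm'+1) h2))
        · intro s hs
          exact ⟨lt_of_le_of_lt (hY0 (mm'+1) (by omega)) hs.1,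
            lt_of_lt_of_le (lt_of_lt_of_le hs.2 (min_le_right _ _)) (hY1 (mm'+2) (by omega))⟩
        · intro s hs
          apply hueq i hi s
          exact ⟨lt_trans hlt1 hs.1, lt_of_lt_of_le hs.2 (min_le_left _ _)⟩
        · intro s hs
          exact pok_ukval k hk (mm'+1) h2 s
            ⟨hs.1, lt_of_lt_of_le hs.2 (min_le_right _ _)⟩
      have hp : ((-1:ℝ)^mm') ≠ 0 := by
        apply pow_ne_zero; norm_num
      have h3 : σ * ((-1:ℝ)^mm') = -(σ * ((-1:ℝ)^mm')) := by
        nth_rewrite 1 [← e1]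
        rw [e2, pow_succ]
        ring
      have h4 : σ * ((-1:ℝ)^mm') = 0 := by linarith
      exact (mul_ne_zero hσne hp) h4
    have B2 : ∀ i, 1 ≤ i → i ≤ m+1 → ∃ mm, 1 ≤ mm ∧ mm ≤ k ∧ pokY k mm = t i := by
      intro i h1 h2
      by_contra hB
      push_neg at hB
      have htpos : 0 < t i := by rw [← ht0]; exact tmono 0 i (by omega) (by omega)
      have htlt1 : t i < 1 := by rw [← htlast']; exact tmono i (m+2) (by omega) le_rfl
      have hne : ∀ mm, mm ≤ k+1 → t i ≠ pokY k mm := by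
        intro mm hmm
        rcases Nat.eq_zero_or_pos mm with h0|hpos
        · subst h0; rw [pokY0]; exact ne_of_gt htpos
        rcases eq_or_lt_of_le hmm with he|hlt
        · rw [he, pokYend]; exact ne_of_lt htlt1
        · exact fun hcon => hB mm hpos (by omega) hcon.symm
      obtain ⟨mm, hmm, hlt1, hlt2⟩ := pok_cover k (pokY k)
        (fun i2 hi2 => pokYmono k hk i2 hi2) (t i)
        (by rw [pokY0]; exact htpos) (by rw [pokYend]; exact htlt1) hne
      obtain ⟨ii, rfl⟩ : ∃ ii, i = ii + 1 := ⟨i-1, by omega⟩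
      have e1 : ε ii = σ * (-1:ℝ)^mm := by
        apply keylem (max (pokY k mm) (t ii)) (t (ii+1)) _ _
          (max_lt hlt1 (htmono ii (by omega)))
        · intro s hs
          exact ⟨lt_of_le_of_lt (le_trans (hY0 mm (by omega)) (le_max_left _ _)) hs.1,
            lt_trans hs.2 htlt1⟩
        · intro s hs
          apply hueq ii (by omega) s
          exact ⟨lt_of_le_of_lt (le_max_right _ _) hs.1, hs.2⟩
        · intro s hs
          exact pok_ukval k hk mm (by omega) s
            ⟨lt_of_le_of_lt (le_max_left _ _) hs.1, lt_trans hs.2 hlt2⟩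
      have e2 : ε (ii+1) = σ * (-1:ℝ)^mm := by
        apply keylem (t (ii+1)) (min (pokY k (mm+1)) (t (ii+2))) _ _
          (lt_min hlt2 (htmono (ii+1) h2))
        · intro s hs
          exact ⟨lt_trans htpos hs.1,
            lt_of_lt_of_le (lt_of_lt_of_le hs.2 (min_le_left _ _)) (hY1 (mm+1) (by omega))⟩
        · intro s hs
          apply hueq (ii+1) h2 s
          exact ⟨hs.1, lt_of_lt_of_le hs.2 (min_le_right _ _)⟩
        · intro s hs
          exact pok_ukval k hk mm (by omega) s
            ⟨lt_trans hlt1 hs.1, lt_of_lt_of_le hs.2 (min_le_left _ _)⟩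
      have halt := hεalt ii h2
      rw [e2, e1] at halt
      have h4 : σ * ((-1:ℝ)^mm) = 0 := by linarith
      exact (mul_ne_zero hσne (by apply pow_ne_zero; norm_num)) h4
    have hjk : m + 1 = k := by
      have hABsub : (Finset.range (m+1)).image (fun i => t (i+1)) ⊆
          (Finset.range k).image (fun mm => pokY k (mm+1)) := by
        intro x hx
        simp only [Finset.mem_image, Finset.mem_range] at hx ⊢
        obtain ⟨i, hi, rfl⟩ := hx
        obtain ⟨mm, h1, h2, h3⟩ := B2 (i+1) (by omega) (by omega)
        exact ⟨mm-1, by omega, by rw [show mm - 1 + 1 = mm by omega]; exact h3⟩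
      have hBAsub : (Finset.range k).image (fun mm => pokY k (mm+1)) ⊆
          (Finset.range (m+1)).image (fun i => t (i+1)) := by
        intro x hx
        simp only [Finset.mem_image, Finset.mem_range] at hx ⊢
        obtain ⟨mm, hmm, rfl⟩ := hx
        obtain ⟨i, h1, h2, h3⟩ := B1 (mm+1) (by omega) (by omega)
        exact ⟨i-1, by omega, by rw [show i - 1 + 1 = i by omega]; exact h3⟩
      have hcard1 : ((Finset.range (m+1)).image (fun i => t (i+1))).card = m+1 := by
        rw [Finset.card_image_of_injOn, Finset.card_range]
        intro x hx y hy hxy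
        simp only [Finset.coe_range, Set.mem_Iio] at hx hy
        have hxy' : t (x+1) = t (y+1) := hxy
        by_contra hne
        rcases Nat.lt_or_ge x y with h|h
        · have := tmono (x+1) (y+1) (by omega) (by omega)
          rw [hxy'] at this; exact lt_irrefl _ this
        · have hyx : y < x := by omega
          have := tmono (y+1) (x+1) (by omega) (by omega)
          rw [hxy'] at this; exact lt_irrefl _ this
      have hcard2 : ((Finset.range k).image (fun mm => pokY k (mm+1))).card = k := by
        rw [Finset.card_image_of_injOn, Finset.card_range]
        intro x hx y hy hxy
        simp only [Finset.coe_range, Set.mem_Iio] at hx hy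
        have hxy' : pokY k (x+1) = pokY k (y+1) := hxy
        by_contra hne
        rcases Nat.lt_or_ge x y with h|h
        · have := Ymono' (x+1) (y+1) (by omega) (by omega)
          rw [hxy'] at this; exact lt_irrefl _ this
        · have hyx : y < x := by omega
          have := Ymono' (y+1) (x+1) (by omega) (by omega)
          rw [hxy'] at this; exact lt_irrefl _ this
      have hAB := Finset.Subset.antisymm hABsub hBAsub
      rw [← hcard1, hAB, hcard2]
    subst hjk
    have hty : ∀ i, i ≤ m+2 → t i = pokY (m+1) i := by
      intro i
      induction i using Nat.strong_induction_on with
      | _ i IH =>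
        intro hi
        rcases Nat.eq_zero_or_pos i with h0|hpos
        · subst h0; rw [ht0, pokY0]
        rcases eq_or_lt_of_le hi with he|hlt
        · subst he; rw [htlast', pokYend' (m+1)]
        rcases lt_trichotomy (t i) (pokY (m+1) i) with hc|hc|hc
        · exfalso
          obtain ⟨mm, h1, h2, h3⟩ := B2 i hpos (by omega)
          have hmlt : mm < i := by
            by_contra hge
            push_neg at hge
            rcases eq_or_lt_of_le hge with heq|hlt2
            · rw [← heq] at h3; linarith
            · have hY := Ymono' i mm hlt2 (by omega)
              rw [h3] at hY
              linarith
          have hIH := IH mm hmlt (by omega)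
          have hlt3 := tmono mm i hmlt (by omega)
          rw [hIH, h3] at hlt3
          exact lt_irrefl _ hlt3
        · exact hc
        · exfalso
          obtain ⟨ii, h1, h2, h3⟩ := B1 i hpos (by omega)
          have hiilt : ii < i := by
            by_contra hge
            push_neg at hge
            rcases eq_or_lt_of_le hge with heq|hlt2
            · rw [← heq] at h3; linarith
            · have hT := tmono i ii hlt2 (by omega)
              rw [h3] at hT
              linarith
          have hIH := IH ii hiilt (by omega)
          rw [hIH] at h3
          have hY := Ymono' ii i hiilt (by omega)
          rw [h3] at hY
          exact lt_irrefl _ hY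
    have hm0 : ((m:ℝ)+1) ≠ 0 := by positivity
    have hl0 : ℓ 0 = 1/(2*((m:ℝ)+1)) := by
      have hll : ℓ 0 = t 1 - t 0 := rfl
      rw [hll, hty 1 (by omega), hty 0 (by omega), pokY0,
        pokYmid (m+1) 1 (by omega) (by omega)]
      push_cast
      field_simp <;> (try ring1) <;> (try norm_num) <;> (try (left; ring))
    have hlend : ℓ (m+1) = 1/(2*((m:ℝ)+1)) := by
      have hll : ℓ (m+1) = t (m+2) - t (m+1) := rfl
      rw [hll, hty (m+2) le_rfl, hty (m+1) (by omega), pokYend' (m+1),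
        pokYmid (m+1) (m+1) (by omega) le_rfl]
      push_cast
      field_simp <;> (try ring1) <;> (try norm_num) <;> (try (left; ring))
    have hlmid : ∀ i, 1 ≤ i → i ≤ m → ℓ i = 1/((m:ℝ)+1) := by
      intro i h1i h2i
      have hll : ℓ i = t (i+1) - t i := rfl
      rw [hll, hty (i+1) (by omega), hty i (by omega),
        pokYmid (m+1) (i+1) (by omega) (by omega), pokYmid (m+1) i (by omega) (by omega)]
      push_cast
      field_simp <;> (try ring1) <;> (try norm_num) <;> (try (left; ring))
    have hSeq : S = 1/(12*((m:ℝ)+1)^2) := (hcore.2).2 ⟨hl0, hlend, hlmid⟩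
    rw [hSeq]
    push_cast
    ring
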